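/- With notation as in the context (q-commuting invertible elements y_a, y_b, y_c in an R-algebra Y, scalars C^ε_{ε'}, and Weyl-normalized elements α(ε,ε'), β(ε,ε'), γ(ε,ε')), for all signs μ, μ', ε, ε' ∈ {+1, −1} the following identity holds in Y: β(μ,ε) · α(μ',ε') = q · α(ε,ε') · β(μ,μ') − q² · C^ε_{μ'} · γ(ε',μ). -/

import Mathlib

/-- The scalars `C^ε_{ε'}`: `C^+_+ = C^-_- = 0`, `C^+_- = q^{-1/2}`,
`C^-_+ = -q^{-5/2}`, where `q2 = q^{1/2}`. -/
def skeinC {R : Type*} [CommRing R] (q2 : Rˣ) (ε ε' : ℤ) : R :=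
  if ε = 1 ∧ ε' = -1 then ((q2 ^ (-1 : ℤ) : Rˣ) : R)
  else if ε = -1 ∧ ε' = 1 then -((q2 ^ (-5 : ℤ) : Rˣ) : R)
  else 0

/-- The Weyl-normalized product of stated arcs: `0` if `(ε, ε') = (-1, 1)`, and
`q^{-εε'/2} · u^ε · v^{ε'}` otherwise (where `q2 = q^{1/2}`, so
`q^{-εε'/2} = q2^{-εε'}`). -/
noncomputable def weylArc {R : Type*} [CommRing R] (q2 : Rˣ)
    {Y : Type*} [Ring Y] [Algebra R Y] (u v : Yˣ) (ε ε' : ℤ) : Y :=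
  if ε = -1 ∧ ε' = 1 then 0
  else algebraMap R Y ((q2 ^ (-(ε * ε')) : Rˣ) : R) * ((u ^ ε : Yˣ) : Y) * ((v ^ ε' : Yˣ) : Y)

section QC
variable {R : Type*} [CommRing R] {Y : Type*} [Ring Y] [Algebra R Y]

lemma qc_rev (u v : Yˣ) (s : Rˣ) (h : (u:Y)*v = (s:R) • ((v:Y)*u)) :
    (v:Y)*u = ((s⁻¹:Rˣ):R) • ((u:Y)*v) := by
  have h2 := congrArg (fun x => ((s⁻¹:Rˣ):R) • x) h
  simp only [smul_smul, ← Units.val_mul, inv_mul_cancel, Units.val_one, one_smul] at h2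
  exact h2.symm

lemma qc_invl (u v : Yˣ) (s : Rˣ) (h : (u:Y)*v = (s:R) • ((v:Y)*u)) :
    ((u⁻¹:Yˣ):Y)*v = ((s⁻¹:Rˣ):R) • ((v:Y)*((u⁻¹:Yˣ):Y)) := by
  have h2 := qc_rev u v s h
  calc ((u⁻¹:Yˣ):Y)*v = ((u⁻¹:Yˣ):Y) * ((v:Y)*u) * ((u⁻¹:Yˣ):Y) := by
        simp [mul_assoc]
    _ = ((s⁻¹:Rˣ):R) • ((v:Y)*((u⁻¹:Yˣ):Y)) := by
        rw [h2]
        simp [mul_smul_comm, smul_mul_assoc, mul_assoc]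

lemma qc_invr (u v : Yˣ) (s : Rˣ) (h : (u:Y)*v = (s:R) • ((v:Y)*u)) :
    (u:Y)*((v⁻¹:Yˣ):Y) = ((s⁻¹:Rˣ):R) • (((v⁻¹:Yˣ):Y)*(u:Y)) := by
  have h2 := qc_invl v u s⁻¹ (qc_rev u v s h)
  simpa using qc_rev v⁻¹ u s (by simpa using h2)

lemma qc_invlr (u v : Yˣ) (s : Rˣ) (h : (u:Y)*v = (s:R) • ((v:Y)*u)) :
    ((u⁻¹:Yˣ):Y)*((v⁻¹:Yˣ):Y) = ((s:Rˣ):R) • (((v⁻¹:Yˣ):Y)*((u⁻¹:Yˣ):Y)) := by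
  have h2 := qc_invr u⁻¹ v s⁻¹ (qc_invl u v s h)
  simpa using h2

lemma qtail {u v : Y} {r : R} (h : u*v = r • (v*u)) (x : Y) :
    u*(v*x) = r • (v*(u*x)) := by
  rw [← mul_assoc, h, smul_mul_assoc, mul_assoc]

end QC



/-- For `q`-commuting invertible elements `y_a, y_b, y_c` of an `R`-algebra `Y`
(Chekhov–Fock triangle relations, with `q = (q^{1/2})²`) and the Weyl-normalized
arcs `α(ε,ε') = [y_c^ε y_b^{ε'}]`, `β(ε,ε') = [y_a^ε y_c^{ε'}]`,
`γ(ε,ε') = [y_b^ε y_a^{ε'}]` (each vanishing on `(-,+)`), one has for all signs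
`μ, μ', ε, ε' ∈ {±1}`:
`β(μ,ε) α(μ',ε') = q α(ε,ε') β(μ,μ') - q² C^ε_{μ'} γ(ε',μ)`. -/
theorem quantum_trace_relation_beta_alpha
    {R : Type*} [CommRing R] (q2 : Rˣ)
    {Y : Type*} [Ring Y] [Algebra R Y]
    (ya yb yc : Yˣ)
    (hba : (yb : Y) * ya = algebraMap R Y ((q2 ^ (2 : ℤ) : Rˣ) : R) * ((ya : Y) * yb))
    (hcb : (yc : Y) * yb = algebraMap R Y ((q2 ^ (2 : ℤ) : Rˣ) : R) * ((yb : Y) * yc))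
    (hac : (ya : Y) * yc = algebraMap R Y ((q2 ^ (2 : ℤ) : Rˣ) : R) * ((yc : Y) * ya))
    (μ μ' ε ε' : ℤ) (hμ : μ = 1 ∨ μ = -1) (hμ' : μ' = 1 ∨ μ' = -1)
    (hε : ε = 1 ∨ ε = -1) (hε' : ε' = 1 ∨ ε' = -1) :
    weylArc q2 ya yc μ ε * weylArc q2 yc yb μ' ε' =
      algebraMap R Y ((q2 ^ (2 : ℤ) : Rˣ) : R) *
        (weylArc q2 yc yb ε ε' * weylArc q2 ya yc μ μ') -
      algebraMap R Y (((q2 ^ (4 : ℤ) : Rˣ) : R) * skeinC q2 ε μ') *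
        weylArc q2 yb ya ε' μ := by
  
  have Hba : (yb:Y)*ya = ((q2^(2:ℤ):Rˣ):R) • ((ya:Y)*yb) := by
    rw [Algebra.smul_def]; exact hba
  have Hcb : (yc:Y)*yb = ((q2^(2:ℤ):Rˣ):R) • ((yb:Y)*yc) := by
    rw [Algebra.smul_def]; exact hcb
  have Hac : (ya:Y)*yc = ((q2^(2:ℤ):Rˣ):R) • ((yc:Y)*ya) := by
    rw [Algebra.smul_def]; exact hac
  have Hca := qc_rev ya yc _ Hac
  have rba1 := Hba
  have rba2 := qc_invr yb ya _ Hba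
  have rba3 := qc_invl yb ya _ Hba
  have rba4 := qc_invlr yb ya _ Hba
  have rcb1 := Hcb
  have rcb2 := qc_invr yc yb _ Hcb
  have rcb3 := qc_invl yc yb _ Hcb
  have rcb4 := qc_invlr yc yb _ Hcb
  have rca1 := Hca
  have rca2 := qc_invr yc ya _ Hca
  have rca3 := qc_invl yc ya _ Hca
  have rca4 := qc_invlr yc ya _ Hca
  have tba1 := qtail rba1
  have tba2 := qtail rba2
  have tba3 := qtail rba3
  have tba4 := qtail rba4
  have tcb1 := qtail rcb1
  have tcb2 := qtail rcb2
  have tcb3 := qtail rcb3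
  have tcb4 := qtail rcb4
  have tca1 := qtail rca1
  have tca2 := qtail rca2
  have tca3 := qtail rca3
  have tca4 := qtail rca4
  rcases hμ with rfl|rfl <;> rcases hμ' with rfl|rfl <;>
    rcases hε with rfl|rfl <;> rcases hε' with rfl|rfl <;>
  · simp only [weylArc, skeinC]
    norm_num
    all_goals simp only [← Algebra.smul_def, zpow_one, zpow_neg_one,
      smul_mul_assoc, mul_smul_comm, smul_smul, mul_assoc,
      rba1, rba2, rba3, rba4, rcb1, rcb2, rcb3, rcb4, rca1, rca2, rca3, rca4,
      tba1, tba2, tba3, tba4, tcb1, tcb2, tcb3, tcb4, tca1, tca2, tca3, tca4,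
      Units.mul_inv_cancel_left, Units.inv_mul_cancel_left,
      Units.mul_inv, Units.inv_mul, mul_one, one_mul,
      smul_zero, zero_mul, mul_zero, sub_zero, zero_sub, neg_neg, sub_self]
    all_goals try rw [eq_comm, sub_eq_zero]
    all_goals simp only [← map_pow, ← Units.val_pow_eq_pow_val, ← Algebra.smul_def, smul_smul, ← Units.val_mul]
    all_goals exact congrArg (fun u : Rˣ => (u:R) • _) (by group)
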